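/- For all bounded linear operators A, B, X on a complex Hilbert space H, ‖A*AX‖ + ‖X B B*‖ ≥ 2‖AXB‖. -/

import Mathlib

open scoped NNReal ENNReal

lemma spectralRadius_mul_le_swap {A : Type*} [NormedRing A] [NormedAlgebra ℂ A]
    (a b : A) : spectralRadius ℂ (b * a) ≤ spectralRadius ℂ (a * b) := by
  rw [spectralRadius, spectralRadius]
  refine iSup₂_le fun k hk => ?_
  rcases eq_or_ne k 0 with rfl | hk0
  · simp
  · have : k ∈ spectrum ℂ (a * b) := by
      have := (spectrum.nonzero_mul_comm (𝕜 := ℂ) b a) ▸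
        (Set.mem_diff_singleton.mpr ⟨hk, hk0⟩)
      exact this.1
    exact le_iSup₂ (f := fun k (_ : k ∈ spectrum ℂ (a * b)) => (‖k‖₊ : ℝ≥0∞)) k this

theorem agmi_sum (H : Type*) [NormedAddCommGroup H] [InnerProductSpace ℂ H]
    [CompleteSpace H] (A B X : H →L[ℂ] H) :
    ‖(star A) * A * X‖ + ‖X * B * (star B)‖ ≥ 2 * ‖A * X * B‖ := by
  rcases subsingleton_or_nontrivial H with h | h
  · have h0 : ∀ Y : H →L[ℂ] H, Y = 0 := fun Y => Subsingleton.elim _ _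
    simp [h0 (star A * A * X), h0 (X * B * star B), h0 (A * X * B)]
  · set T := A * X * B with hT
    have key : ‖T‖ ^ 2 ≤ ‖star A * A * X‖ * ‖X * B * star B‖ := by
      have h1 : spectralRadius ℂ (T * star T) ≤
          spectralRadius ℂ ((star A) * (A * X * B * star B * star X)) := by
        have := spectralRadius_mul_le_swap (A := H →L[ℂ] H)
          (star A) (A * X * B * star B * star X)
        have heq : A * X * B * star B * star X * star A = T * star T := by
          simp only [hT, star_mul, mul_assoc]
        rw [heq] at this
        exact this
      have h2 : spectralRadius ℂ (T * star T) = (‖T * star T‖₊ : ℝ≥0∞) :=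
        (IsSelfAdjoint.mul_star_self T).spectralRadius_eq_nnnorm
      have h3 : spectralRadius ℂ ((star A) * (A * X * B * star B * star X)) ≤
          (‖(star A) * (A * X * B * star B * star X)‖₊ : ℝ≥0∞) :=
        spectrum.spectralRadius_le_nnnorm _
      have h4 : (‖T * star T‖₊ : ℝ≥0∞) ≤
          ‖(star A) * (A * X * B * star B * star X)‖₊ := h2 ▸ (h1.trans h3)
      have h5 : ‖T * star T‖ ≤ ‖(star A) * (A * X * B * star B * star X)‖ := by
        exact_mod_cast h4
      have heq2 : (star A) * (A * X * B * star B * star X) =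
          (star A * A * X) * star (X * B * star B) := by
        simp only [star_mul, star_star, mul_assoc]
      have h6 : ‖(star A) * (A * X * B * star B * star X)‖ ≤
          ‖star A * A * X‖ * ‖X * B * star B‖ := by
        rw [heq2]
        calc ‖(star A * A * X) * star (X * B * star B)‖ ≤
            ‖star A * A * X‖ * ‖star (X * B * star B)‖ := norm_mul_le _ _
          _ = ‖star A * A * X‖ * ‖X * B * star B‖ := by rw [norm_star]
      have h7 : ‖T * star T‖ = ‖T‖ ^ 2 := by
        rw [CStarRing.norm_self_mul_star, sq]
      linarith
    have ha : (0:ℝ) ≤ ‖star A * A * X‖ := norm_nonneg _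
    have hb : (0:ℝ) ≤ ‖X * B * star B‖ := norm_nonneg _
    have ht : (0:ℝ) ≤ ‖T‖ := norm_nonneg _
    nlinarith [sq_nonneg (‖star A * A * X‖ - ‖X * B * star B‖),
      sq_nonneg (‖star A * A * X‖ + ‖X * B * star B‖ - 2 * ‖T‖)]
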